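/- Let K > 1 be an integer and for k ∈ {1,...,K} define α_k(x) := x^{k−1} · ∑_{ℓ=k}^{K} C(ℓ−1, k−1)·(1−x)^{ℓ−k}, where C denotes the binomial coefficient. Then for every k ∈ {1,...,K} and every x ∈ (0,1), the derivative of x ↦ x·α_k(x) at x is strictly positive. -/

import Mathlib

lemma key_deriv (k' d : ℕ) (x : ℝ) :
    HasDerivAt (fun y : ℝ => ∑ ℓ ∈ Finset.Icc (k' + 1) (k' + 1 + d),
        ((ℓ - 1).choose k' : ℝ) * (y ^ (k' + 1) * (1 - y) ^ (ℓ - (k' + 1))))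
      ((k' + 1) * ((k' + 1 + d).choose (k' + 1)) * x ^ k' * (1 - x) ^ d) x := by
  induction d with
  | zero =>
    have h := hasDerivAt_pow (k' + 1) x
    simp only [Nat.add_zero, Finset.Icc_self, Finset.sum_singleton, Nat.add_sub_cancel,
      Nat.choose_self, Nat.sub_self, pow_zero, Nat.cast_one, one_mul, mul_one]
    refine h.congr_deriv ?_
    push_cast
    ring
  | succ d ih =>
    have hnew : HasDerivAt
        (fun y : ℝ => ((k' + d + 1).choose k' : ℝ) * (y ^ (k' + 1) * (1 - y) ^ (d + 1)))
        (((k' + d + 1).choose k' : ℝ) * ((k' + 1) * x ^ k' * (1 - x) ^ (d + 1)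
          + x ^ (k' + 1) * ((d + 1) * (1 - x) ^ d * (-1)))) x := by
      have h1 := hasDerivAt_pow (k' + 1) x
      have h2 : HasDerivAt (fun y : ℝ => (1 - y) ^ (d + 1))
          ((d + 1) * (1 - x) ^ d * (-1)) x := by
        have := ((hasDerivAt_id x).const_sub 1).pow (d + 1)
        simpa [Pi.pow_def] using this
      have := (h1.mul h2).const_mul ((k' + d + 1).choose k' : ℝ)
      refine this.congr_deriv ?_
      push_cast
      ring
    have hsum : ∀ y : ℝ,
        ∑ ℓ ∈ Finset.Icc (k' + 1) (k' + 1 + (d + 1)),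
            ((ℓ - 1).choose k' : ℝ) * (y ^ (k' + 1) * (1 - y) ^ (ℓ - (k' + 1)))
        = (∑ ℓ ∈ Finset.Icc (k' + 1) (k' + 1 + d),
            ((ℓ - 1).choose k' : ℝ) * (y ^ (k' + 1) * (1 - y) ^ (ℓ - (k' + 1))))
          + ((k' + d + 1).choose k' : ℝ) * (y ^ (k' + 1) * (1 - y) ^ (d + 1)) := by
      intro y
      have : k' + 1 + (d + 1) = (k' + 1 + d) + 1 := by ring
      rw [this, Finset.sum_Icc_succ_top (by omega : k' + 1 ≤ k' + 1 + d + 1),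
        show k' + 1 + d + 1 - 1 = k' + d + 1 from by omega,
        show k' + 1 + d + 1 - (k' + 1) = d + 1 from by omega]
    have hD := ih.add hnew
    have heq : (fun y : ℝ => ∑ ℓ ∈ Finset.Icc (k' + 1) (k' + 1 + (d + 1)),
        ((ℓ - 1).choose k' : ℝ) * (y ^ (k' + 1) * (1 - y) ^ (ℓ - (k' + 1))))
        = fun y => (∑ ℓ ∈ Finset.Icc (k' + 1) (k' + 1 + d),
            ((ℓ - 1).choose k' : ℝ) * (y ^ (k' + 1) * (1 - y) ^ (ℓ - (k' + 1))))
          + ((k' + d + 1).choose k' : ℝ) * (y ^ (k' + 1) * (1 - y) ^ (d + 1)) := by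
      funext y; exact hsum y
    rw [heq]
    refine hD.congr_deriv ?_
    have hrec : ((k' + d + 1).choose (k' + 1) : ℝ) * (k' + 1)
        = ((k' + d + 1).choose k' : ℝ) * (d + 1) := by
      have h := Nat.choose_succ_right_eq (k' + d + 1) k'
      have hh : k' + d + 1 - k' = d + 1 := by omega
      rw [hh] at h
      exact_mod_cast congrArg (Nat.cast : ℕ → ℝ) h
    rw [show k' + 1 + (d + 1) = (k' + d + 1) + 1 from by omega,
      show k' + 1 + d = k' + d + 1 from by omega,
      show ((k' + d + 1) + 1).choose (k' + 1)
          = (k' + d + 1).choose k' + (k' + d + 1).choose (k' + 1)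
        from Nat.choose_succ_succ _ _]
    push_cast
    linear_combination (x ^ k' * (1 - x) ^ d * x) * hrec

/-- For `K > 1` and `α_k(x) = x^(k-1) ∑_{ℓ=k}^K C(ℓ-1,k-1) (1-x)^(ℓ-k)`,
the derivative of `x ↦ x * α_k x` is strictly positive on `(0,1)`, for every
`k ∈ {1,…,K}`. -/
theorem deriv_x_mul_alpha_pos
    (K : ℕ) (hK : 1 < K) (α : ℕ → ℝ → ℝ)
    (hα : ∀ k ∈ Finset.Icc 1 K, ∀ x : ℝ,
      α k x = x ^ (k - 1) *
        ∑ ℓ ∈ Finset.Icc k K, ((ℓ - 1).choose (k - 1) : ℝ) * (1 - x) ^ (ℓ - k)) :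
    ∀ k ∈ Finset.Icc 1 K, ∀ x ∈ Set.Ioo (0 : ℝ) 1,
      0 < deriv (fun y : ℝ => y * α k y) x := by
  intro k hk x hx
  obtain ⟨hk1, hkK⟩ := Finset.mem_Icc.mp hk
  obtain ⟨k', rfl⟩ : ∃ k', k = k' + 1 := ⟨k - 1, by omega⟩
  obtain ⟨d, rfl⟩ : ∃ d, K = k' + 1 + d := ⟨K - (k' + 1), by omega⟩
  have hfun : (fun y : ℝ => y * α (k' + 1) y)
      = fun y : ℝ => ∑ ℓ ∈ Finset.Icc (k' + 1) (k' + 1 + d),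
          ((ℓ - 1).choose k' : ℝ) * (y ^ (k' + 1) * (1 - y) ^ (ℓ - (k' + 1))) := by
    funext y
    rw [hα (k' + 1) hk y]
    simp only [Nat.add_sub_cancel]
    rw [Finset.mul_sum, Finset.mul_sum]
    exact Finset.sum_congr rfl fun ℓ _ => by ring
  rw [hfun, (key_deriv k' d x).deriv]
  obtain ⟨hx0, hx1⟩ := hx
  have hc : 0 < ((k' + 1 + d).choose (k' + 1) : ℝ) := by
    exact_mod_cast Nat.choose_pos (by omega)
  have h1 : (0:ℝ) < (k' : ℝ) + 1 := by positivity
  exact mul_pos (mul_pos (mul_pos h1 hc) (pow_pos hx0 _)) (pow_pos (by linarith) _)
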